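/- Let n ≥ 3 be an integer, ℓ > 0, r₀ > 0, a ∈ ℝ, r₊ > 0, and define V : (0,∞) → ℝ by V(r) = (r²/ℓ²)(1 + a/r^{n−1} − r₀ⁿ/rⁿ), assumed positive on (r₊, ∞). Define 𝓔(r) := [ (n+1)r²/(ℓ³V(r)) − r³V'(r)/(ℓ³V(r)²) − ℓV(r)/r² − (n−2)/ℓ ] − [ (r/ℓ)·(d/dr)( r²/(ℓ²V(r)) + ℓ²V(r)/r² ) ] − [ 3r²/(ℓ³V(r)) − r⁴/(ℓ⁵V(r)²) − 2/ℓ ]. Then lim_{r→∞} rⁿ·𝓔(r) = −r₀ⁿ/ℓ. Consequently, for λ > 0, β > 0, G > 0, the Hamiltonian energy E(g) := (1/(8πℓλ))·(λβ/ℓ)·lim_{r→∞} rⁿ𝓔(r) equals −βr₀ⁿ/(8πℓ³), and the Hawking–Horowitz mass E_HH(g) = −λβr₀ⁿ/(16πGℓ²) satisfies E_HH(g) = (λℓ/(2G))·E(g). -/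

import Mathlib

open Filter Topology

lemma aux_inv_pow16 (c : ℝ) (k : ℕ) {r : ℝ} (hr : r ≠ 0) :
    HasDerivAt (fun s : ℝ => c / s ^ (k+1)) (-(((k:ℝ)+1) * c) / r ^ (k+2)) r := by
  have h := ((hasDerivAt_pow (k+1) r).inv (pow_ne_zero _ hr)).const_mul c
  have hfun : (fun s : ℝ => c * (s ^ (k+1))⁻¹) = fun s => c / s ^ (k+1) := by
    funext s; rw [div_eq_mul_inv]
  simp only [Pi.inv_apply] at h
  rw [hfun] at h
  refine h.congr_deriv ?_
  rw [Nat.add_sub_cancel]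
  push_cast
  field_simp
  ring

/-- closed-form comparison function for `r^n * 𝓔(r)`. -/
noncomputable def g16 (m : ℕ) (ℓ r₀ a : ℝ) (r : ℝ) : ℝ :=
  (-(((a - r₀ ^ (m+3) / r) ^ 2 / r ^ (m+1)) *
      ((-(m:ℝ) - 2) + (-(m:ℝ) - 1) * (a / r ^ (m+2) - r₀ ^ (m+3) / r ^ (m+3)))) /
    (1 + a / r ^ (m+2) - r₀ ^ (m+3) / r ^ (m+3)) ^ 2 - r₀ ^ (m+3)) / ℓ

lemma g16_tendsto (m : ℕ) (ℓ r₀ a : ℝ) :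
    Tendsto (fun r => g16 m ℓ r₀ a r) atTop (nhds (-(r₀ ^ (m+3)) / ℓ)) := by
  have hpow : ∀ (k : ℕ), k ≠ 0 → ∀ c : ℝ, Tendsto (fun r : ℝ => c / r ^ k) atTop (nhds 0) :=
    fun k hk c => tendsto_const_nhds.div_atTop (tendsto_pow_atTop hk)
  have h3 : Tendsto (fun r : ℝ => r₀ ^ (m+3) / r) atTop (nhds 0) :=
    tendsto_const_nhds.div_atTop tendsto_id
  have hX : Tendsto (fun r : ℝ => (a - r₀ ^ (m+3) / r) ^ 2 / r ^ (m+1)) atTop (nhds 0) :=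
    ((tendsto_const_nhds.sub h3).pow 2).div_atTop (tendsto_pow_atTop (by omega))
  have hu : Tendsto (fun r : ℝ => a / r ^ (m+2) - r₀ ^ (m+3) / r ^ (m+3)) atTop
      (nhds (0 - 0)) := (hpow _ (by omega) a).sub (hpow _ (by omega) _)
  have hY : Tendsto (fun r : ℝ => (-(m:ℝ) - 2) + (-(m:ℝ) - 1) *
      (a / r ^ (m+2) - r₀ ^ (m+3) / r ^ (m+3))) atTop
      (nhds ((-(m:ℝ) - 2) + (-(m:ℝ) - 1) * (0 - 0))) :=
    tendsto_const_nhds.add (tendsto_const_nhds.mul hu)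
  have hW : Tendsto (fun r : ℝ => (1 + a / r ^ (m+2) - r₀ ^ (m+3) / r ^ (m+3)) ^ 2) atTop
      (nhds ((1 + 0 - 0) ^ 2)) :=
    ((tendsto_const_nhds.add (hpow _ (by omega) a)).sub (hpow _ (by omega) _)).pow 2
  have H := ((((hX.mul hY).neg.div hW (by norm_num)).sub
      (tendsto_const_nhds (x := r₀ ^ (m+3)))).div_const ℓ)
  unfold g16
  convert H using 2
  all_goals norm_num

theorem stmt_16 (n : ℕ) (hn : 3 ≤ n) (ℓ r₀ : ℝ) (hℓ : 0 < ℓ) (hr₀ : 0 < r₀) (a : ℝ)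
    (rp : ℝ) (hrp : 0 < rp) (lam β G : ℝ) (hlam : 0 < lam) (hβ : 0 < β) (hG : 0 < G)
    (V : ℝ → ℝ)
    (hV : ∀ r > (0 : ℝ), V r = r ^ 2 / ℓ ^ 2 * (1 + a / r ^ (n - 1) - r₀ ^ n / r ^ n))
    (hVpos : ∀ r > rp, 0 < V r)
    (E : ℝ → ℝ)
    (hE : ∀ r > rp, E r =
      (((n : ℝ) + 1) * r ^ 2 / (ℓ ^ 3 * V r) - r ^ 3 * deriv V r / (ℓ ^ 3 * (V r) ^ 2)
        - ℓ * V r / r ^ 2 - ((n : ℝ) - 2) / ℓ)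
      - (r / ℓ) * deriv (fun s => s ^ 2 / (ℓ ^ 2 * V s) + ℓ ^ 2 * V s / s ^ 2) r
      - (3 * r ^ 2 / (ℓ ^ 3 * V r) - r ^ 4 / (ℓ ^ 5 * (V r) ^ 2) - 2 / ℓ)) :
    Tendsto (fun r => r ^ n * E r) atTop (nhds (-(r₀ ^ n) / ℓ)) ∧
    (1 / (8 * Real.pi * ℓ * lam)) * (lam * β / ℓ) * (-(r₀ ^ n) / ℓ)
      = -(β * r₀ ^ n) / (8 * Real.pi * ℓ ^ 3) ∧
    -(lam * β * r₀ ^ n) / (16 * Real.pi * G * ℓ ^ 2)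
      = (lam * ℓ / (2 * G)) * (-(β * r₀ ^ n) / (8 * Real.pi * ℓ ^ 3)) := by
  refine ⟨?_, ?_, ?_⟩
  · -- the limit
    obtain ⟨m, rfl⟩ : ∃ m, n = m + 3 := ⟨n - 3, by omega⟩
    have h31 : m + 3 - 1 = m + 2 := rfl
    rw [h31] at hV
    have key : ∀ r : ℝ, rp < r → g16 m ℓ r₀ a r = r ^ (m+3) * E r := by
      intro r hr
      have hr0 : (0:ℝ) < r := lt_trans hrp hr
      have hsq : HasDerivAt (fun s : ℝ => s ^ 2) (2 * r) r := by
        simpa using hasDerivAt_pow 2 r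
      have hWder : HasDerivAt (fun s : ℝ => 1 + a / s ^ (m+2) - r₀ ^ (m+3) / s ^ (m+3))
          (-(((m:ℝ)+2) * a) / r ^ (m+3) + ((m:ℝ)+3) * r₀ ^ (m+3) / r ^ (m+4)) r := by
        have h1 := aux_inv_pow16 a (m+1) hr0.ne'
        have h2 := aux_inv_pow16 (r₀ ^ (m+3)) (m+2) hr0.ne'
        refine (((hasDerivAt_const r (1:ℝ)).add h1).sub h2).congr_deriv ?_
        push_cast
        ring
      have hVF : HasDerivAt
          (fun s : ℝ => s ^ 2 / ℓ ^ 2 * (1 + a / s ^ (m+2) - r₀ ^ (m+3) / s ^ (m+3)))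
          (2 * r / ℓ ^ 2 * (1 + a / r ^ (m+2) - r₀ ^ (m+3) / r ^ (m+3)) +
            r ^ 2 / ℓ ^ 2 *
              (-(((m:ℝ)+2) * a) / r ^ (m+3) + ((m:ℝ)+3) * r₀ ^ (m+3) / r ^ (m+4))) r :=
        (hsq.div_const (ℓ ^ 2)).mul hWder
      have hevv : V =ᶠ[nhds r]
          (fun s : ℝ => s ^ 2 / ℓ ^ 2 * (1 + a / s ^ (m+2) - r₀ ^ (m+3) / s ^ (m+3))) := by
        filter_upwards [eventually_gt_nhds hr0] with s hs
        exact hV s hs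
      have hVd := hVF.congr_of_eventuallyEq hevv
      have h2 : HasDerivAt (fun s : ℝ => ℓ ^ 2 * V s)
          (ℓ ^ 2 * (2 * r / ℓ ^ 2 * (1 + a / r ^ (m+2) - r₀ ^ (m+3) / r ^ (m+3)) +
            r ^ 2 / ℓ ^ 2 *
              (-(((m:ℝ)+2) * a) / r ^ (m+3) + ((m:ℝ)+3) * r₀ ^ (m+3) / r ^ (m+4)))) r :=
        hVd.const_mul (ℓ ^ 2)
      have hne : ℓ ^ 2 * V r ≠ 0 := ne_of_gt (mul_pos (pow_pos hℓ 2) (hVpos r hr))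
      have hI := (hsq.div h2 hne).add (h2.div hsq (pow_ne_zero 2 hr0.ne'))
      have hwpos : 0 < 1 + a / r ^ (m+2) - r₀ ^ (m+3) / r ^ (m+3) := by
        have h1 := hVpos r hr
        rw [hV r hr0] at h1
        by_contra hcon
        push_neg at hcon
        nlinarith [div_pos (pow_pos hr0 2) (pow_pos hℓ 2)]
      rw [hE r hr, hVd.deriv, (show deriv (fun s => s ^ 2 / (ℓ ^ 2 * V s) + ℓ ^ 2 * V s / s ^ 2) r = _ from hI.deriv), hV r hr0]
      unfold g16
      set w := 1 + a / r ^ (m+2) - r₀ ^ (m+3) / r ^ (m+3) with hw_def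
      have ha : a = (w - 1) * r ^ (m+2) + r₀ ^ (m+3) / r := by
        rw [hw_def]
        field_simp
        ring
      rw [ha]
      push_cast
      field_simp
      ring
    have hEq : (fun r : ℝ => g16 m ℓ r₀ a r) =ᶠ[atTop] fun r => r ^ (m+3) * E r := by
      filter_upwards [eventually_gt_atTop rp] with r hr
      exact key r hr
    exact (g16_tendsto m ℓ r₀ a).congr' hEq
  · field_simp
  · field_simp
    ring
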